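/- arXiv:1011.2417 — 2 statements merged into one kernel-verified Lean document; each statement's English description precedes it below -/
import Mathlib

section
/- Let a, b be positive reals with a ≠ b. The Genocchi-type numbers 𝒢_n(a,b), defined by 2t/(b^t+a^t) = Σ 𝒢_n(a,b) t^n/n!, satisfy 𝒢_n(a,b) = Σ_{k=0}^n (n choose k) (−1)^{n−k} (ln a)^{n−k} (ln b − ln a)^{k−1} G_k, where G_k are the classical Genocchi numbers. -/
open Real Finset

/-- If a power series (with factorial denominators) sums to zero on a ball around 0,
all its coefficients vanish. -/
private lemma coeff_eq_zero_of_hasSum_zero (c : ℕ → ℝ) (r : ℝ) (hr : 0 < r)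
    (h : ∀ t : ℝ, |t| < r → HasSum (fun n : ℕ => c n * t ^ n / n.factorial) (0 : ℝ)) :
    ∀ n, c n = 0 := by
  set p : FormalMultilinearSeries ℝ ℝ ℝ :=
    fun n => ContinuousMultilinearMap.mkPiRing ℝ (Fin n) (c n / n.factorial) with hp
  have hpn : ∀ n, ‖p n‖ = |c n| / n.factorial := fun n => by
    simp [hp, Real.norm_eq_abs, abs_div, Nat.abs_cast]
  have happ : ∀ (n : ℕ) (y : ℝ), (p n fun _ => y) = c n * y ^ n / n.factorial := by
    intro n y
    simp [hp, ContinuousMultilinearMap.mkPiRing_apply, smul_eq_mul]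
    ring
  have hr2 : (0 : ℝ) < r / 2 := by positivity
  set r' : NNReal := ⟨r / 2, hr2.le⟩ with hr'
  have hr'2 : (r' : ℝ) = r / 2 := rfl
  have hball : HasFPowerSeriesOnBall (0 : ℝ → ℝ) p 0 r' := by
    constructor
    · have h2 : |(r : ℝ) / 2| < r := by
        rw [abs_of_pos hr2]; linarith
      have ht : Filter.Tendsto (fun n : ℕ => c n * (r / 2) ^ n / n.factorial)
          Filter.atTop (nhds 0) := (h (r / 2) h2).summable.tendsto_atTop_zero
      obtain ⟨C, hC⟩ := (ht.abs).bddAbove_range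
      apply p.le_radius_of_bound C
      intro n
      have hCn : |c n * (r / 2) ^ n / n.factorial| ≤ C := by
        simpa using hC (Set.mem_range_self n)
      rw [hpn]
      calc |c n| / n.factorial * (r' : ℝ) ^ n
          = |c n * (r / 2) ^ n / n.factorial| := by
            rw [hr'2, abs_div, abs_mul, abs_pow, abs_of_pos hr2, Nat.abs_cast]
            ring
        _ ≤ C := hCn
    · exact_mod_cast (show (0 : NNReal) < r' from by
        rw [← NNReal.coe_pos, hr'2]; exact hr2)
    · intro y hy
      rw [mem_emetric_ball_zero_iff] at hy
      have hy' : |y| < r := by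
        have h1 : (‖y‖₊ : ℝ) < r / 2 := by exact_mod_cast hy
        have : |y| = ‖y‖ := (Real.norm_eq_abs y).symm
        rw [this]
        calc ‖y‖ = (‖y‖₊ : ℝ) := rfl
          _ < r / 2 := h1
          _ < r := by linarith
      simpa [happ] using h y hy'
  intro n
  have h0 := hball.hasFPowerSeriesAt.apply_eq_zero n 1
  rw [happ] at h0
  have hfac : (n.factorial : ℝ) ≠ 0 := Nat.cast_ne_zero.mpr n.factorial_ne_zero
  field_simp at h0
  simpa using h0

theorem genocchi_type_numbers_expansion
    (a b : ℝ) (ha : 0 < a) (hb : 0 < b) (hab : a ≠ b)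
    (𝒢 : ℕ → ℝ)
    (h𝒢 : ∀ t : ℝ, |t| < Real.pi / |Real.log a - Real.log b| →
      HasSum (fun n : ℕ => 𝒢 n * t ^ n / n.factorial) (2 * t / (b ^ t + a ^ t)))
    (G : ℕ → ℝ)
    (hG : ∀ t : ℝ, |t| < Real.pi →
      HasSum (fun n : ℕ => G n * t ^ n / n.factorial) (2 * t / (Real.exp t + 1))) :
    ∀ n : ℕ, 𝒢 n =
      ∑ k ∈ Finset.range (n + 1), (n.choose k : ℝ) * (-1) ^ (n - k) *
        (Real.log a) ^ (n - k) * (Real.log b - Real.log a) ^ (k - 1) * G k := by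
  set L := Real.log a with hL
  set c := Real.log b - Real.log a with hcdef
  have hc : c ≠ 0 := by
    intro h
    apply hab
    have hlog : Real.log a = Real.log b := by
      have := sub_eq_zero.mp h; linarith
    calc a = Real.exp (Real.log a) := (Real.exp_log ha).symm
      _ = Real.exp (Real.log b) := by rw [hlog]
      _ = b := Real.exp_log hb
  have habs : |Real.log a - Real.log b| = |c| := by rw [hcdef, abs_sub_comm]
  set r := Real.pi / |c| with hrdef
  have hr : 0 < r := div_pos Real.pi_pos (abs_pos.mpr hc)
  -- G 0 = 0
  have hG0 : G 0 = 0 := by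
    have h0 := hG 0 (by simpa using Real.pi_pos)
    have h1 : HasSum (fun n : ℕ => G n * (0 : ℝ) ^ n / n.factorial) (G 0) := by
      have := hasSum_single (f := fun n : ℕ => G n * (0 : ℝ) ^ n / n.factorial) 0
        (fun n hn => by simp [zero_pow hn])
      simpa using this
    have := h0.unique h1
    simpa using this.symm
  -- the shifted Genocchi series
  have hH : ∀ t : ℝ, |t| < r →
      HasSum (fun k : ℕ => (G k * c ^ (k - 1)) * t ^ k / k.factorial)
        (2 * t / (Real.exp (c * t) + 1)) := by
    intro t ht
    have hct : |c * t| < Real.pi := by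
      rw [abs_mul]
      calc |c| * |t| < |c| * r := by
            exact mul_lt_mul_of_pos_left ht (abs_pos.mpr hc)
        _ = Real.pi := by
            rw [hrdef]; field_simp
    have h1 := (hG (c * t) hct).mul_left c⁻¹
    have hne : Real.exp (c * t) + 1 ≠ 0 := by positivity
    have hval : c⁻¹ * (2 * (c * t) / (Real.exp (c * t) + 1))
        = 2 * t / (Real.exp (c * t) + 1) := by
      field_simp
    rw [hval] at h1
    have heq : (fun k : ℕ => (G k * c ^ (k - 1)) * t ^ k / k.factorial)
        = fun k : ℕ => c⁻¹ * (G k * (c * t) ^ k / k.factorial) := by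
      funext k
      cases k with
      | zero => simp [hG0]
      | succ m =>
        rw [mul_pow, pow_succ]
        have hm : (m + 1) - 1 = m := rfl
        rw [hm]
        field_simp
        ring
    rw [heq]
    exact h1
  -- absolute summability of the shifted Genocchi series
  have hHnorm : ∀ t : ℝ, |t| < r →
      Summable (fun k : ℕ => ‖(G k * c ^ (k - 1)) * t ^ k / k.factorial‖) := by
    intro t ht
    have habs0 : (0 : ℝ) ≤ |t| := abs_nonneg t
    obtain ⟨t1, ht1pos, htt1, ht1r⟩ : ∃ t1 : ℝ, 0 < t1 ∧ |t| < t1 ∧ t1 < r :=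
      ⟨(|t| + r) / 2, by linarith, by linarith, by linarith⟩
    have ht1abs : |t1| < r := by rwa [abs_of_pos ht1pos]
    obtain ⟨C, hC⟩ :=
      ((hH t1 ht1abs).summable.tendsto_atTop_zero.abs).bddAbove_range
    have hCn : ∀ k : ℕ, |(G k * c ^ (k - 1)) * t1 ^ k / k.factorial| ≤ C := by
      intro k; simpa using hC (Set.mem_range_self k)
    set q := |t| / t1 with hq
    have hq1 : q < 1 := (div_lt_one ht1pos).mpr htt1
    have hq0 : 0 ≤ q := by positivity
    refine Summable.of_nonneg_of_le (fun k => norm_nonneg _) (fun k => ?_)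
      ((summable_geometric_of_lt_one hq0 hq1).mul_left C)
    have hkey : ‖(G k * c ^ (k - 1)) * t ^ k / k.factorial‖
        = |(G k * c ^ (k - 1)) * t1 ^ k / k.factorial| * q ^ k := by
      have e1 : |t| ^ k = t1 ^ k * q ^ k := by
        rw [← mul_pow, hq]
        congr 1
        field_simp
      simp only [Real.norm_eq_abs, abs_div, abs_mul, abs_pow, Nat.abs_cast,
        abs_of_pos ht1pos]
      rw [e1]
      ring
    rw [hkey]
    exact mul_le_mul_of_nonneg_right (hCn k) (pow_nonneg hq0 k)
  -- exponential series
  have hE : ∀ t : ℝ, HasSum (fun m : ℕ => (-(L * t)) ^ m / m.factorial)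
      (Real.exp (-(L * t))) := by
    intro t
    rw [Real.exp_eq_exp_ℝ]
    exact NormedSpace.expSeries_div_hasSum_exp (-(L * t))
  have hEnorm : ∀ t : ℝ, Summable (fun m : ℕ => ‖(-(L * t)) ^ m / m.factorial‖) := by
    intro t
    refine (Real.summable_pow_div_factorial |L * t|).congr fun m => ?_
    simp [Real.norm_eq_abs, abs_div, abs_pow, abs_mul, Nat.abs_cast]
  -- Cauchy product
  have hprod : ∀ t : ℝ, |t| < r →
      HasSum (fun n : ℕ => ∑ k ∈ Finset.range (n + 1),
          ((-(L * t)) ^ k / k.factorial) *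
            ((G (n - k) * c ^ ((n - k) - 1)) * t ^ (n - k) / (n - k).factorial))
        (Real.exp (-(L * t)) * (2 * t / (Real.exp (c * t) + 1))) := by
    intro t ht
    have h := hasSum_sum_range_mul_of_summable_norm (hEnorm t) (hHnorm t ht)
    rwa [(hE t).tsum_eq, (hH t ht).tsum_eq] at h
  -- the product equals the Genocchi-type generating function
  have hval : ∀ t : ℝ, Real.exp (-(L * t)) * (2 * t / (Real.exp (c * t) + 1))
      = 2 * t / (b ^ t + a ^ t) := by
    intro t
    have hbt : b ^ t = Real.exp (Real.log b * t) := Real.rpow_def_of_pos hb t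
    have hat : a ^ t = Real.exp (L * t) := Real.rpow_def_of_pos ha t
    rw [hbt, hat]
    have hsplit : Real.exp (Real.log b * t) = Real.exp (L * t) * Real.exp (c * t) := by
      rw [← Real.exp_add]; congr 1; rw [hcdef, hL]; ring
    rw [hsplit, Real.exp_neg]
    have hfac : Real.exp (L * t) * Real.exp (c * t) + Real.exp (L * t)
        = Real.exp (L * t) * (Real.exp (c * t) + 1) := by ring
    rw [hfac, inv_mul_eq_div, div_div,
      mul_comm (Real.exp (c * t) + 1) (Real.exp (L * t))]
  -- rearranging the Cauchy product terms
  have hterm : ∀ (t : ℝ) (n : ℕ),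
      (∑ k ∈ Finset.range (n + 1),
          ((-(L * t)) ^ k / k.factorial) *
            ((G (n - k) * c ^ ((n - k) - 1)) * t ^ (n - k) / (n - k).factorial))
      = (∑ k ∈ Finset.range (n + 1), (n.choose k : ℝ) * (-1) ^ (n - k) *
          L ^ (n - k) * c ^ (k - 1) * G k) * t ^ n / n.factorial := by
    intro t n
    have hrefl := Finset.sum_range_reflect
      (fun j => ((-(L * t)) ^ (n - j) / (n - j).factorial) *
        ((G j * c ^ (j - 1)) * t ^ j / j.factorial)) (n + 1)
    have hlhs : (∑ k ∈ Finset.range (n + 1),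
          ((-(L * t)) ^ k / k.factorial) *
            ((G (n - k) * c ^ ((n - k) - 1)) * t ^ (n - k) / (n - k).factorial))
        = ∑ j ∈ Finset.range (n + 1),
          ((-(L * t)) ^ (n - j) / (n - j).factorial) *
            ((G j * c ^ (j - 1)) * t ^ j / j.factorial) := by
      rw [← hrefl]
      apply Finset.sum_congr rfl
      intro k hk
      have hkn : k ≤ n := Nat.lt_succ_iff.mp (Finset.mem_range.mp hk)
      have h1 : n + 1 - 1 - k = n - k := by omega
      have h2 : n - (n - k) = k := Nat.sub_sub_self hkn
      rw [h1, h2]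
    rw [hlhs, Finset.sum_mul, Finset.sum_div]
    apply Finset.sum_congr rfl
    intro k hk
    have hkn : k ≤ n := Nat.lt_succ_iff.mp (Finset.mem_range.mp hk)
    have h1 : (-(L * t)) ^ (n - k) = (-1) ^ (n - k) * L ^ (n - k) * t ^ (n - k) := by
      rw [neg_pow, mul_pow]; ring
    have h2 : t ^ (n - k) * t ^ k = t ^ n := by
      rw [← pow_add, Nat.sub_add_cancel hkn]
    have h3 : (n.choose k : ℝ) = n.factorial / (k.factorial * (n - k).factorial) :=
      Nat.cast_choose ℝ hkn
    have hk' : (k.factorial : ℝ) ≠ 0 := Nat.cast_ne_zero.mpr k.factorial_ne_zero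
    have hnk' : ((n - k).factorial : ℝ) ≠ 0 := Nat.cast_ne_zero.mpr (n - k).factorial_ne_zero
    have hn' : (n.factorial : ℝ) ≠ 0 := Nat.cast_ne_zero.mpr n.factorial_ne_zero
    rw [h1, h3, ← h2]
    field_simp
  -- the coefficient-wise statement via uniqueness of power series
  have key : ∀ n : ℕ,
      𝒢 n - (∑ k ∈ Finset.range (n + 1), (n.choose k : ℝ) * (-1) ^ (n - k) *
        L ^ (n - k) * c ^ (k - 1) * G k) = 0 := by
    apply coeff_eq_zero_of_hasSum_zero _ r hr
    intro t ht
    have hr' : Real.pi / |Real.log a - Real.log b| = r := by rw [habs, hrdef]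
    have h1 := h𝒢 t (by rwa [hr'])
    have h2 : HasSum (fun n : ℕ => (∑ k ∈ Finset.range (n + 1),
        (n.choose k : ℝ) * (-1) ^ (n - k) * L ^ (n - k) * c ^ (k - 1) * G k)
          * t ^ n / n.factorial) (2 * t / (b ^ t + a ^ t)) := by
      have h := hprod t ht
      rw [hval t] at h
      have heq : (fun n : ℕ => ∑ k ∈ Finset.range (n + 1),
          ((-(L * t)) ^ k / k.factorial) *
            ((G (n - k) * c ^ ((n - k) - 1)) * t ^ (n - k) / (n - k).factorial))
          = fun n : ℕ => (∑ k ∈ Finset.range (n + 1), (n.choose k : ℝ) * (-1) ^ (n - k) *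
              L ^ (n - k) * c ^ (k - 1) * G k) * t ^ n / n.factorial := by
        funext n; exact hterm t n
      rwa [heq] at h
    have h3 := h1.sub h2
    rw [sub_self] at h3
    have heq2 : (fun n : ℕ => (𝒢 n - ∑ k ∈ Finset.range (n + 1),
        (n.choose k : ℝ) * (-1) ^ (n - k) * L ^ (n - k) * c ^ (k - 1) * G k)
          * t ^ n / n.factorial)
        = fun n : ℕ => 𝒢 n * t ^ n / n.factorial - (∑ k ∈ Finset.range (n + 1),
        (n.choose k : ℝ) * (-1) ^ (n - k) * L ^ (n - k) * c ^ (k - 1) * G k)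
          * t ^ n / n.factorial := by
      funext m; ring
    rw [heq2]
    exact h3
  intro n
  have := key n
  linarith
end

section
/- Let a, b, c be positive reals with a ≠ b and let x, y be real. Then 𝒢_n(x+y;a,b,c) = Σ_{k=0}^n (n choose k) 𝒢_k(x;a,b,c) (y ln c)^{n−k}. -/
open Real Finset

/-- Uniqueness of exponential generating series coefficients: if the series sums to `0`
on a ball around `0`, all coefficients vanish. -/
lemma egf_coeff_zero (r : ℝ) (hr : 0 < r) (d : ℕ → ℝ)
    (h : ∀ t : ℝ, |t| < r → HasSum (fun n : ℕ => d n * t ^ n / n.factorial) 0) :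
    ∀ n, d n = 0 := by
  set p : FormalMultilinearSeries ℝ ℝ ℝ :=
    FormalMultilinearSeries.ofScalars ℝ (fun n => d n / n.factorial) with hp
  have hr2 : (0:ℝ) < r / 2 := by linarith
  have habs : |r / 2| < r := by rw [abs_of_pos hr2]; linarith
  set r' : NNReal := ⟨r / 2, le_of_lt hr2⟩ with hr'
  have hrad : (r' : ENNReal) ≤ p.radius := by
    apply p.le_radius_of_summable
    have hs : Summable fun n : ℕ => ‖d n * (r / 2) ^ n / n.factorial‖ :=
      summable_norm_iff.mpr (h (r / 2) habs).summable
    refine hs.congr fun n => ?_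
    have hcoe : (r' : ℝ) = r / 2 := rfl
    rw [hp, FormalMultilinearSeries.ofScalars_norm, hcoe, Real.norm_eq_abs, Real.norm_eq_abs,
      abs_div, abs_div, abs_mul, abs_pow, abs_of_pos hr2, Nat.abs_cast]
    ring
  have hball : HasFPowerSeriesOnBall (fun _ : ℝ => (0:ℝ)) p 0 r' := by
    refine ⟨hrad, by exact_mod_cast hr2, ?_⟩
    intro t ht
    rw [EMetric.mem_ball] at ht
    have ht' : |t| < r := by
      have : ‖t‖₊ < r' := by
        simpa [edist_zero_right] using ht
      have := (NNReal.coe_lt_coe.mpr this)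
      simp only [coe_nnnorm, Real.norm_eq_abs] at this
      calc |t| < r / 2 := this
        _ < r := by linarith
    have := h t ht'
    convert this using 2 with n
    · rfl
    · rw [hp, FormalMultilinearSeries.ofScalars_apply_eq]
      rw [smul_eq_mul]
      ring
  have hzero : p = 0 := hball.hasFPowerSeriesAt.eq_zero
  intro n
  have hpn : FormalMultilinearSeries.ofScalars ℝ (fun n => (d n / n.factorial : ℝ)) n = 0 := by
    rw [← hp, hzero]; rfl
  have hdn := (FormalMultilinearSeries.ofScalars_eq_zero ℝ n).mp hpn
  have hfac : (n.factorial : ℝ) ≠ 0 := by positivity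
  field_simp at hdn
  simpa using hdn

theorem genocchi_type_polynomials_addition
    (a b c : ℝ) (ha : 0 < a) (hb : 0 < b) (hc : 0 < c) (hab : a ≠ b)
    (𝒢P : ℕ → ℝ → ℝ)
    (h𝒢P : ∀ x t : ℝ, |t| < Real.pi / |Real.log a - Real.log b| →
      HasSum (fun n : ℕ => 𝒢P n x * t ^ n / n.factorial)
        (2 * t / (b ^ t + a ^ t) * c ^ (x * t))) :
    ∀ (n : ℕ) (x y : ℝ), 𝒢P n (x + y) =
      ∑ k ∈ Finset.range (n + 1), (n.choose k : ℝ) * 𝒢P k x * (y * Real.log c) ^ (n - k) := by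
  intro n x y
  set r : ℝ := Real.pi / |Real.log a - Real.log b| with hrdef
  have hlog : Real.log a ≠ Real.log b := fun h =>
    hab (Real.log_injOn_pos (Set.mem_Ioi.mpr ha) (Set.mem_Ioi.mpr hb) h)
  have hr : 0 < r := by
    apply div_pos Real.pi_pos
    rw [abs_pos, sub_ne_zero]
    exact hlog
  -- the difference coefficients
  set d : ℕ → ℝ := fun n => 𝒢P n (x + y) -
    ∑ k ∈ Finset.range (n + 1), (n.choose k : ℝ) * 𝒢P k x * (y * Real.log c) ^ (n - k) with hd
  suffices hdz : ∀ m, d m = 0 by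
    have := hdz n
    rw [hd] at this
    simpa [sub_eq_zero] using this
  apply egf_coeff_zero r hr
  intro t ht
  -- series for 𝒢P at x + y
  have h1 := h𝒢P (x + y) t ht
  -- series for 𝒢P at x
  have hx := h𝒢P x t ht
  -- exponential series for c ^ (y * t)
  have hexp : HasSum (fun m : ℕ => (y * Real.log c * t) ^ m / m.factorial)
      (c ^ (y * t)) := by
    have := NormedSpace.expSeries_div_hasSum_exp (y * Real.log c * t)
    rw [← Real.exp_eq_exp_ℝ] at this
    have hcyt : c ^ (y * t) = Real.exp (y * Real.log c * t) := by
      rw [Real.rpow_def_of_pos hc]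
      congr 1
      ring
    rw [hcyt]
    exact this
  -- Cauchy product
  have hfn : Summable fun k : ℕ => ‖𝒢P k x * t ^ k / k.factorial‖ :=
    summable_norm_iff.mpr hx.summable
  have hgn : Summable fun m : ℕ => ‖(y * Real.log c * t) ^ m / m.factorial‖ :=
    summable_norm_iff.mpr hexp.summable
  have hprod := hasSum_sum_range_mul_of_summable_norm hfn hgn
  rw [hx.tsum_eq, hexp.tsum_eq] at hprod
  -- identify the Cauchy product terms
  have hterm : ∀ m : ℕ, (∑ k ∈ Finset.range (m + 1),
      (𝒢P k x * t ^ k / k.factorial) * ((y * Real.log c * t) ^ (m - k) / (m - k).factorial)) =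
      (∑ k ∈ Finset.range (m + 1),
        (m.choose k : ℝ) * 𝒢P k x * (y * Real.log c) ^ (m - k)) * t ^ m / m.factorial := by
    intro m
    rw [Finset.sum_mul, Finset.sum_div]
    apply Finset.sum_congr rfl
    intro k hk
    have hkm : k ≤ m := Nat.lt_succ_iff.mp (Finset.mem_range.mp hk)
    have hchoose : (m.choose k : ℝ) * k.factorial * (m - k).factorial = m.factorial := by
      exact_mod_cast Nat.choose_mul_factorial_mul_factorial hkm
    have htp : t ^ k * t ^ (m - k) = t ^ m := by
      rw [← pow_add, Nat.add_sub_cancel' hkm]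
    have hk0 : (k.factorial : ℝ) ≠ 0 := by positivity
    have hmk0 : ((m - k).factorial : ℝ) ≠ 0 := by positivity
    have hm0 : (m.factorial : ℝ) ≠ 0 := by positivity
    rw [mul_pow]
    field_simp
    rw [← hchoose, ← htp]
    ring
  have h2 : HasSum (fun m : ℕ => (∑ k ∈ Finset.range (m + 1),
      (m.choose k : ℝ) * 𝒢P k x * (y * Real.log c) ^ (m - k)) * t ^ m / m.factorial)
      (2 * t / (b ^ t + a ^ t) * c ^ ((x + y) * t)) := by
    have := hprod.congr_fun fun m => (hterm m).symm
    convert this using 1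
    · rfl
    rw [add_mul, Real.rpow_add hc, ← mul_assoc]
  -- subtract
  have h3 := h1.sub h2
  rw [sub_self] at h3
  apply h3.congr_fun
  intro m
  simp only [hd]
  ring
end
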